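/- Let Ω ⊆ ℝ^n×ℝ^m be an open set of finite measure and let x ∈ ℝ^n×ℝ^m satisfy M_s(χ_Ω̄)(x) < 1/4. Then there is no pair of dyadic rectangles S = I_S×J_S and R = I_R×J_R such that x ∈ S, R ⊆ Ω, ℓ(I_R) ≥ ℓ(I_S), ℓ(J_R) ≥ ℓ(J_S), and 2R ∩ 2S ≠ ∅ (where 2R, 2S are the concentric double dilates). Equivalently, for such x, any dyadic rectangle R ⊆ Ω whose double meets the double of a dyadic rectangle S containing x must satisfy ℓ(I_R) < ℓ(I_S) or ℓ(J_R) < ℓ(J_S). -/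

import Mathlib

open MeasureTheory Filter
open scoped ENNReal NNReal BigOperators

noncomputable section

/-- Points of `ℝ^n × ℝ^m`. -/
abbrev Pt (n m : ℕ) := (Fin n → ℝ) × (Fin m → ℝ)

/-- An open cube in `ℝ^d` with center `c` and half side length `r`. -/
def openCube {d : ℕ} (c : Fin d → ℝ) (r : ℝ) : Set (Fin d → ℝ) :=
  {x | ∀ i, |x i - c i| < r}

/-- The strong maximal function on `ℝ^n × ℝ^m`: the supremum of averages of `|f|`
over products of open cubes `Q₁ × Q₂` containing the point. -/
def Ms {n m : ℕ} (f : Pt n m → ℝ) (x : Pt n m) : ℝ≥0∞ :=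
  ⨆ (c₁ : Fin n → ℝ) (r₁ : ℝ) (c₂ : Fin m → ℝ) (r₂ : ℝ)
    (_ : 0 < r₁) (_ : 0 < r₂) (_ : x ∈ openCube c₁ r₁ ×ˢ openCube c₂ r₂),
    (volume (openCube c₁ r₁ ×ˢ openCube c₂ r₂))⁻¹ *
      ∫⁻ y in openCube c₁ r₁ ×ˢ openCube c₂ r₂, ‖f y‖₊
/-- A dyadic rectangle `R = I × J ⊆ ℝ^n × ℝ^m`, where `I` is the dyadic cube of
side length `2^j` at position `a` and `J` the dyadic cube of side length `2^k`
at position `b`. -/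
structure DRect (n m : ℕ) where
  j : ℤ
  a : Fin n → ℤ
  k : ℤ
  b : Fin m → ℤ

/-- The dyadic cube of side length `2^j` at position `a`. -/
def dyadicCube {d : ℕ} (j : ℤ) (a : Fin d → ℤ) : Set (Fin d → ℝ) :=
  {x | ∀ i, (a i : ℝ) * 2 ^ j ≤ x i ∧ x i < ((a i : ℝ) + 1) * 2 ^ j}

/-- The center of the dyadic cube of side length `2^j` at position `a`. -/
def cubeCenter {d : ℕ} (j : ℤ) (a : Fin d → ℤ) : Fin d → ℝ :=
  fun i => ((a i : ℝ) + 1 / 2) * 2 ^ j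

/-- The concentric dilate, by a factor `lam`, of the dyadic cube of side length `2^j`
at position `a`. -/
def dilCube {d : ℕ} (lam : ℝ) (j : ℤ) (a : Fin d → ℤ) : Set (Fin d → ℝ) :=
  {x | ∀ i, |x i - cubeCenter j a i| ≤ lam * 2 ^ j / 2}

/-- The subset of `ℝ^n × ℝ^m` determined by a dyadic rectangle. -/
def DRect.set {n m : ℕ} (R : DRect n m) : Set (Pt n m) :=
  dyadicCube R.j R.a ×ˢ dyadicCube R.k R.b

/-- The concentric dilate `lam • R` of a dyadic rectangle. -/
def DRect.dil {n m : ℕ} (lam : ℝ) (R : DRect n m) : Set (Pt n m) :=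
  dilCube lam R.j R.a ×ˢ dilCube lam R.k R.b

/-- `Ω̄`: the union of `6R` over all dyadic rectangles `R ⊆ Ω`. -/
def coverSet {n m : ℕ} (Ω : Set (Pt n m)) : Set (Pt n m) :=
  ⋃ (R : DRect n m) (_ : R.set ⊆ Ω), DRect.dil 6 R

lemma openCube_eq' {d : ℕ} (c : Fin d → ℝ) (r : ℝ) :
    openCube c r = Set.univ.pi fun i => Set.Ioo (c i - r) (c i + r) := by
  ext x
  simp only [openCube, Set.mem_setOf_eq, Set.mem_pi, Set.mem_univ, Set.mem_Ioo,
    forall_true_left, abs_lt]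
  exact forall_congr' fun i => by constructor <;> rintro ⟨h1, h2⟩ <;> constructor <;> linarith

lemma volume_openCube' {d : ℕ} (c : Fin d → ℝ) (r : ℝ) :
    volume (openCube c r) = ENNReal.ofReal (2*r) ^ d := by
  rw [openCube_eq', volume_pi_pi]
  simp [Real.volume_Ioo]
  ring_nf
  rw [ENNReal.ofReal_mul' (by norm_num), mul_pow, ENNReal.ofReal_ofNat]

lemma measurableSet_openCube' {d : ℕ} (c : Fin d → ℝ) (r : ℝ) :
    MeasurableSet (openCube c r) := by
  rw [openCube_eq']
  exact MeasurableSet.univ_pi fun i => measurableSet_Ioo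

/-- If `M_s(χ_Ω̄)(x) < 1/4`, then there is no pair of dyadic rectangles
`S ∋ x` and `R ⊆ Ω` with `ℓ(I_R) ≥ ℓ(I_S)`, `ℓ(J_R) ≥ ℓ(J_S)` and `2R ∩ 2S ≠ ∅`. -/
theorem no_large_rectangle {n m : ℕ} (hn : 1 ≤ n) (hm : 1 ≤ m) (Ω : Set (Pt n m))
    (hΩ : IsOpen Ω) (hΩfin : volume Ω < ⊤) (x : Pt n m)
    (hx : Ms ((coverSet Ω).indicator fun _ => (1 : ℝ)) x < (1 / 4 : ℝ≥0∞)) :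
    ¬ ∃ S R : DRect n m, x ∈ S.set ∧ R.set ⊆ Ω ∧
        S.j ≤ R.j ∧ S.k ≤ R.k ∧ (DRect.dil 2 R ∩ DRect.dil 2 S).Nonempty := by
  rintro ⟨S, R, hxS, hRΩ, hj, hk, z, hz2R, hz2S⟩
  set c₁ : Fin n → ℝ := cubeCenter R.j R.a with hc₁
  set c₂ : Fin m → ℝ := cubeCenter R.k R.b with hc₂
  set r₁ : ℝ := 3 * 2 ^ R.j with hr₁def
  set r₂ : ℝ := 3 * 2 ^ R.k with hr₂def
  have hr₁ : (0:ℝ) < r₁ := by positivity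
  have hr₂ : (0:ℝ) < r₂ := by positivity
  have hsj : (2:ℝ) ^ S.j ≤ 2 ^ R.j := zpow_le_zpow_right₀ one_le_two hj
  have hsk : (2:ℝ) ^ S.k ≤ 2 ^ R.k := zpow_le_zpow_right₀ one_le_two hk
  set Q : Set (Pt n m) := openCube c₁ r₁ ×ˢ openCube c₂ r₂ with hQdef
  -- x ∈ Q
  have hxQ : x ∈ Q := by
    constructor
    · intro i
      have h1 := hxS.1 i
      have h2 := hz2S.1 i
      have h3 := hz2R.1 i
      rw [abs_le] at h2 h3
      rw [abs_lt]
      simp only [cubeCenter, dyadicCube, Set.mem_setOf_eq] at h1 h2 h3 ⊢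
      have e1 : ((S.a i : ℝ) + 1/2) * 2 ^ S.j - (S.a i : ℝ) * 2 ^ S.j = 2 ^ S.j / 2 := by ring
      have e2 : ((S.a i : ℝ) + 1) * 2 ^ S.j - ((S.a i : ℝ) + 1/2) * 2 ^ S.j = 2 ^ S.j / 2 := by
        ring
      have hp : (0:ℝ) < 2 ^ S.j := by positivity
      have e3 : c₁ i = ((R.a i : ℝ) + 1/2) * 2 ^ R.j := rfl
      rw [e3, hr₁def]
      constructor <;> linarith [h1.1, h1.2, h2.1, h2.2, h3.1, h3.2]
    · intro i
      have h1 := hxS.2 i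
      have h2 := hz2S.2 i
      have h3 := hz2R.2 i
      rw [abs_le] at h2 h3
      rw [abs_lt]
      simp only [cubeCenter, dyadicCube, Set.mem_setOf_eq] at h1 h2 h3 ⊢
      have e1 : ((S.b i : ℝ) + 1/2) * 2 ^ S.k - (S.b i : ℝ) * 2 ^ S.k = 2 ^ S.k / 2 := by ring
      have e2 : ((S.b i : ℝ) + 1) * 2 ^ S.k - ((S.b i : ℝ) + 1/2) * 2 ^ S.k = 2 ^ S.k / 2 := by
        ring
      have hp : (0:ℝ) < 2 ^ S.k := by positivity
      have e3 : c₂ i = ((R.b i : ℝ) + 1/2) * 2 ^ R.k := rfl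
      rw [e3, hr₂def]
      constructor <;> linarith [h1.1, h1.2, h2.1, h2.2, h3.1, h3.2]
  -- Q ⊆ coverSet Ω
  have hQsub : Q ⊆ coverSet Ω := by
    intro y hy
    refine Set.mem_iUnion₂.mpr ⟨R, hRΩ, ?_, ?_⟩
    · intro i
      have := hy.1 i
      have e : (6:ℝ) * 2 ^ R.j / 2 = r₁ := by rw [hr₁def]; ring
      rw [e]
      exact this.le
    · intro i
      have := hy.2 i
      have e : (6:ℝ) * 2 ^ R.k / 2 = r₂ := by rw [hr₂def]; ring
      rw [e]
      exact this.le
  -- volume of Q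
  have hvolQ : volume Q = ENNReal.ofReal (2*r₁) ^ n * ENNReal.ofReal (2*r₂) ^ m := by
    rw [hQdef, Measure.volume_eq_prod, Measure.prod_prod, volume_openCube',
      volume_openCube']
  have hvol_pos : 0 < volume Q := by
    rw [hvolQ]
    apply ENNReal.mul_pos
    · exact pow_ne_zero n (ENNReal.ofReal_pos.mpr (by linarith)).ne'
    · exact pow_ne_zero m (ENNReal.ofReal_pos.mpr (by linarith)).ne'
  have hvol_ne_top : volume Q ≠ ⊤ := by
    rw [hvolQ]
    exact ENNReal.mul_ne_top (ENNReal.pow_ne_top ENNReal.ofReal_ne_top)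
      (ENNReal.pow_ne_top ENNReal.ofReal_ne_top)
  have hQmeas : MeasurableSet Q := (measurableSet_openCube' c₁ r₁).prod
    (measurableSet_openCube' c₂ r₂)
  -- the integral over Q equals the volume of Q
  have hint : (∫⁻ y in Q, ‖(coverSet Ω).indicator (fun _ => (1:ℝ)) y‖₊) = volume Q := by
    have heq : ∀ y ∈ Q, (‖(coverSet Ω).indicator (fun _ => (1:ℝ)) y‖₊ : ℝ≥0∞) = 1 := by
      intro y hy
      rw [Set.indicator_of_mem (hQsub hy)]
      simp
    rw [setLIntegral_congr_fun hQmeas heq, setLIntegral_one]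
  -- conclude Ms ≥ 1
  have hMs : (1:ℝ≥0∞) ≤ Ms ((coverSet Ω).indicator fun _ => (1 : ℝ)) x := by
    have h1 : (1:ℝ≥0∞) = (volume Q)⁻¹ *
        ∫⁻ y in Q, ‖(coverSet Ω).indicator (fun _ => (1:ℝ)) y‖₊ := by
      rw [hint, ENNReal.inv_mul_cancel hvol_pos.ne' hvol_ne_top]
    rw [h1]
    exact le_iSup_of_le c₁ (le_iSup_of_le r₁ (le_iSup_of_le c₂ (le_iSup_of_le r₂
      (le_iSup_of_le hr₁ (le_iSup_of_le hr₂ (le_iSup_of_le hxQ le_rfl))))))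
  have : (1:ℝ≥0∞) < 1/4 := hMs.trans_lt hx
  have h4 : (1/4:ℝ≥0∞) ≤ 1 := by
    rw [ENNReal.div_le_iff (by norm_num) (by norm_num)]
    norm_num
  exact absurd this (not_lt.mpr h4)
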